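/- arXiv:1807.07958 — 2 statements merged into one kernel-verified Lean document; each statement's English description precedes it below -/
import Mathlib

section
/- Let Y₁ and Y₂ be real-valued random variables with Y₁ > 0 and Y₂ > 0 almost surely, let b > 0, set R = Y₂ / Y₁^b and Z = (log Y₁, log Y₂), and let p ∈ (0,1). If y₁ > 0 and y₂ > 0 are real numbers with y₂ / y₁^b < Q_R(p), then the point (log y₁, log y₂) does not belong to the directional quantile envelope D(p) of Z (subnormal-ratio part of Corollary 2: the tangent half-space of points with R < Q_R(p) is disjoint from D(p)). -/
open MeasureTheory Real
open scoped ENNReal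

/-- The quantile function `Q_X(p) = inf {x : P(X <= x) >= p}`. -/
noncomputable def quantileFn {Ω : Type*} [MeasurableSpace Ω] (μ : MeasureTheory.Measure Ω)
    (X : Ω → ℝ) (p : ℝ) : ℝ :=
  sInf {x : ℝ | ENNReal.ofReal p ≤ μ {ω | X ω ≤ x}}

/-- The `p`-th directional quantile envelope of a random vector `W` with values in `ℝ^K`:
the intersection over unit directions `d` of the half-spaces
`{w : ⟨d, w⟩ ≥ Q_{⟨d,W⟩}(p)}`. -/
noncomputable def dqe {Ω : Type*} [MeasurableSpace Ω] (μ : MeasureTheory.Measure Ω) {K : ℕ}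
    (W : Ω → EuclideanSpace ℝ (Fin K)) (p : ℝ) : Set (EuclideanSpace ℝ (Fin K)) :=
  ⋂ (d : EuclideanSpace ℝ (Fin K)) (_ : ‖d‖ = 1),
    {w : EuclideanSpace ℝ (Fin K) | quantileFn μ (fun ω => (inner ℝ d (W ω) : ℝ)) p ≤ (inner ℝ d w : ℝ)}

/-- Nonemptiness of the quantile set for p < 1. -/
lemma quantile_set_nonempty {Ω : Type*} [MeasurableSpace Ω] (μ : Measure Ω)
    [IsProbabilityMeasure μ] (X : Ω → ℝ) {p : ℝ} (hp : p < 1) :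
    {x : ℝ | ENNReal.ofReal p ≤ μ {ω | X ω ≤ x}}.Nonempty := by
  have hmono : Monotone (fun n : ℕ => {ω | X ω ≤ (n : ℝ)}) := by
    intro m n hmn ω hω
    simp only [Set.mem_setOf_eq] at hω ⊢
    exact le_trans hω (by exact_mod_cast hmn)
  have hunion : (⋃ n : ℕ, {ω | X ω ≤ (n : ℝ)}) = Set.univ := by
    ext ω
    simp only [Set.mem_iUnion, Set.mem_univ, iff_true, Set.mem_setOf_eq]
    obtain ⟨n, hn⟩ := exists_nat_ge (X ω)
    exact ⟨n, hn⟩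
  have h := hmono.measure_iUnion (μ := μ)
  rw [hunion, measure_univ] at h
  have hlt : ENNReal.ofReal p < 1 := by
    exact lt_of_lt_of_le (ENNReal.ofReal_lt_one.2 hp) le_rfl
  rw [h] at hlt
  obtain ⟨n, hn⟩ := lt_iSup_iff.1 hlt
  exact ⟨n, hn.le⟩

theorem stmt3 {Ω : Type*} [MeasurableSpace Ω] (μ : Measure Ω) [IsProbabilityMeasure μ]
    (Y₁ Y₂ : Ω → ℝ) (hY₁ : ∀ᵐ ω ∂μ, 0 < Y₁ ω) (hY₂ : ∀ᵐ ω ∂μ, 0 < Y₂ ω)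
    (b : ℝ) (hb : 0 < b) (p : ℝ) (hp : p ∈ Set.Ioo (0 : ℝ) 1)
    (R : Ω → ℝ) (hR : R = fun ω => Y₂ ω / (Y₁ ω) ^ b)
    (Z : Ω → EuclideanSpace ℝ (Fin 2))
    (hZ : Z = fun ω => WithLp.toLp 2 ![Real.log (Y₁ ω), Real.log (Y₂ ω)])
    (y₁ y₂ : ℝ) (hy₁ : 0 < y₁) (hy₂ : 0 < y₂)
    (hlt : y₂ / y₁ ^ b < quantileFn μ R p) :
    (WithLp.toLp 2 ![Real.log y₁, Real.log y₂] : EuclideanSpace ℝ (Fin 2)) ∉ dqe μ Z p := by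
  intro hmem
  set c : ℝ := Real.sqrt (b ^ 2 + 1) with hcdef
  have hc0 : 0 < c := Real.sqrt_pos.2 (by positivity)
  have hcsq : c ^ 2 = b ^ 2 + 1 := Real.sq_sqrt (by positivity)
  set d : EuclideanSpace ℝ (Fin 2) := WithLp.toLp 2 ![-b / c, 1 / c] with hd
  have hdnorm : ‖d‖ = 1 := by
    rw [EuclideanSpace.norm_eq]
    rw [show ∑ i, ‖d i‖ ^ 2 = ‖d 0‖ ^ 2 + ‖d 1‖ ^ 2 from Fin.sum_univ_two _]
    have h0 : d 0 = -b / c := rfl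
    have h1 : d 1 = 1 / c := rfl
    rw [h0, h1, Real.norm_eq_abs, Real.norm_eq_abs, sq_abs, sq_abs]
    rw [show (-b / c) ^ 2 + (1 / c) ^ 2 = (b ^ 2 + 1) / c ^ 2 by field_simp]
    rw [← hcsq, div_self (by positivity), Real.sqrt_one]
  -- inner products
  have hinner : ∀ w : EuclideanSpace ℝ (Fin 2),
      (inner ℝ d w : ℝ) = (-b / c) * w 0 + (1 / c) * w 1 := by
    intro w
    rw [PiLp.inner_apply, Fin.sum_univ_two]
    simp [hd, RCLike.inner_apply]
    ring
  have hmem' : quantileFn μ (fun ω => (inner ℝ d (Z ω) : ℝ)) p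
      ≤ (inner ℝ d (WithLp.toLp 2 ![Real.log y₁, Real.log y₂] : EuclideanSpace ℝ (Fin 2)) : ℝ) := by
    simp only [dqe, Set.mem_iInter] at hmem
    exact hmem d hdnorm
  have hw : (inner ℝ d (WithLp.toLp 2 ![Real.log y₁, Real.log y₂] : EuclideanSpace ℝ (Fin 2)) : ℝ)
      = Real.log (y₂ / y₁ ^ b) / c := by
    rw [hinner]
    show (-b / c) * Real.log y₁ + (1 / c) * Real.log y₂ = _
    rw [Real.log_div (ne_of_gt hy₂) (by positivity), Real.log_rpow hy₁]
    field_simp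
    ring
  -- pick q between y₂/y₁^b and the R-quantile
  obtain ⟨q, hq1, hq2⟩ := exists_between hlt
  have hq0 : 0 < q := lt_trans (by positivity) hq1
  have ht : Real.log (y₂ / y₁ ^ b) / c < Real.log q / c :=
    (div_lt_div_iff_of_pos_right hc0).2 (Real.log_lt_log (by positivity) hq1)
  -- from the envelope membership, extract a point of the quantile set below log q / c
  have hQ'lt : quantileFn μ (fun ω => (inner ℝ d (Z ω) : ℝ)) p < Real.log q / c := by
    calc quantileFn μ (fun ω => (inner ℝ d (Z ω) : ℝ)) p ≤ _ := hmem'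
    _ < _ := hw ▸ ht
  have hne := quantile_set_nonempty μ (fun ω => (inner ℝ d (Z ω) : ℝ)) hp.2
  obtain ⟨s, hsmem, hslt⟩ := exists_lt_of_csInf_lt hne hQ'lt
  have hsmem' : ENNReal.ofReal p ≤ μ {ω | (inner ℝ d (Z ω) : ℝ) ≤ s} := hsmem
  have hmono : μ {ω | (inner ℝ d (Z ω) : ℝ) ≤ s} ≤ μ {ω | (inner ℝ d (Z ω) : ℝ) ≤ Real.log q / c} :=
    measure_mono (fun ω hω => le_trans hω hslt.le)
  have hp2 : ENNReal.ofReal p ≤ μ {ω | (inner ℝ d (Z ω) : ℝ) ≤ Real.log q / c} :=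
    le_trans hsmem' hmono
  -- a.e. identification of the sets
  have hae : {ω | (inner ℝ d (Z ω) : ℝ) ≤ Real.log q / c} =ᵐ[μ] {ω | R ω ≤ q} := by
    filter_upwards [hY₁, hY₂] with ω h1 h2
    have hZω : (inner ℝ d (Z ω) : ℝ) = Real.log (R ω) / c := by
      rw [hinner, hZ, hR]
      show (-b / c) * Real.log (Y₁ ω) + (1 / c) * Real.log (Y₂ ω) = _
      rw [Real.log_div (ne_of_gt h2) (by positivity), Real.log_rpow h1]
      field_simp
      ring
    have hRω : 0 < R ω := by rw [hR]; positivity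
    show ((inner ℝ d (Z ω) : ℝ) ≤ Real.log q / c) = (R ω ≤ q)
    rw [hZω, eq_iff_iff, div_le_div_iff_of_pos_right hc0]
    exact Real.log_le_log_iff hRω hq0
  rw [measure_congr hae] at hp2
  have hqmem : q ∈ {x : ℝ | ENNReal.ofReal p ≤ μ {ω | R ω ≤ x}} := hp2
  have hRpos : ∀ᵐ ω ∂μ, 0 < R ω := by
    filter_upwards [hY₁, hY₂] with ω h1 h2
    rw [hR]; positivity
  have hbdd : BddBelow {x : ℝ | ENNReal.ofReal p ≤ μ {ω | R ω ≤ x}} := by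
    refine ⟨0, fun x hx => ?_⟩
    by_contra hxneg
    push_neg at hxneg
    have hnull : μ {ω | R ω ≤ x} = 0 := by
      refine measure_mono_null (fun ω hω => ?_) (ae_iff.1 hRpos)
      exact not_lt.2 (le_of_lt (lt_of_le_of_lt hω hxneg))
    simp only [Set.mem_setOf_eq, hnull] at hx
    exact absurd hx (by simpa using (ENNReal.ofReal_pos.2 hp.1))
  have : quantileFn μ R p ≤ q := csInf_le hbdd hqmem
  exact absurd hq2 (not_lt.2 this)
end

section
/- Let K ≥ 2, let Y = (Y₁,…,Y_K) be a random vector with Y_k > 0 almost surely for all k, fix an index i, let b_{ij} > 0 for all j ≠ i, set R_i = Y_i^{K−1} / ∏_{j≠i} Y_j^{b_{ij}} and Z = (log Y₁,…,log Y_K), and let p ∈ (0,1). Then the directional quantile envelope D(p) of Z is contained in the closed half-space {z ∈ ℝ^K : (K−1)·z_i − ∑_{j≠i} b_{ij}·z_j ≥ log Q_{R_i}(p)}; equivalently, every z ∈ D(p) satisfies z_i ≥ (1/(K−1))·log Q_{R_i}(p) + ∑_{j≠i} (b_{ij}/(K−1))·z_j (the first tangent hyperplane of Proposition 2). -/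
open MeasureTheory Real
open scoped ENNReal Pointwise

lemma log_sInf_le {Ω : Type*} [MeasurableSpace Ω] (μ : Measure Ω) (R : Ω → ℝ)
    (hpos : ∀ᵐ ω ∂μ, 0 < R ω) {p : ℝ} (hp : 0 < p) :
    Real.log (sInf {y : ℝ | ENNReal.ofReal p ≤ μ {ω | R ω ≤ y}}) ≤
      sInf {x : ℝ | ENNReal.ofReal p ≤ μ {ω | Real.log (R ω) ≤ x}} := by
  set S : Set ℝ := {y : ℝ | ENNReal.ofReal p ≤ μ {ω | R ω ≤ y}} with hS
  set S' : Set ℝ := {x : ℝ | ENNReal.ofReal p ≤ μ {ω | Real.log (R ω) ≤ x}} with hS'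
  have hSy : ∀ y ∈ S, 0 < y := by
    intro y hy
    by_contra h
    push_neg at h
    have h0 : μ {ω | R ω ≤ y} = 0 := by
      rw [measure_eq_zero_iff_ae_notMem]
      filter_upwards [hpos] with ω hω
      simp only [Set.mem_setOf_eq, not_le]
      exact lt_of_le_of_lt h hω
    have := hy
    rw [Set.mem_setOf_eq, h0, nonpos_iff_eq_zero] at this
    exact absurd this (ENNReal.ofReal_pos.mpr hp).ne'
  have hST : ∀ x ∈ S', Real.exp x ∈ S := by
    intro x hx
    refine le_trans hx (measure_mono_ae ?_)
    filter_upwards [hpos] with ω hω hlog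
    calc R ω = Real.exp (Real.log (R ω)) := (Real.exp_log hω).symm
    _ ≤ Real.exp x := Real.exp_le_exp.mpr hlog
  have hTS : ∀ y ∈ S, Real.log y ∈ S' := by
    intro y hy
    refine le_trans hy (measure_mono_ae ?_)
    filter_upwards [hpos] with ω hω hle
    exact Real.log_le_log hω hle
  have hSbdd : BddBelow S := ⟨0, fun y hy => (hSy y hy).le⟩
  by_cases hne : S'.Nonempty
  · obtain ⟨x0, hx0⟩ := id hne
    have hSne : S.Nonempty := ⟨Real.exp x0, hST x0 hx0⟩
    have hS0 : 0 ≤ sInf S := le_csInf hSne fun y hy => (hSy y hy).le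
    by_cases hbd : BddBelow S'
    · obtain ⟨m, hm⟩ := hbd
      have hlb : ∀ y ∈ S, Real.exp m ≤ y := by
        intro y hy
        calc Real.exp m ≤ Real.exp (Real.log y) := Real.exp_le_exp.mpr (hm (hTS y hy))
        _ = y := Real.exp_log (hSy y hy)
      have hSpos : 0 < sInf S := lt_of_lt_of_le (Real.exp_pos m) (le_csInf hSne hlb)
      refine le_csInf hne fun x hx => ?_
      have h1 : sInf S ≤ Real.exp x := csInf_le hSbdd (hST x hx)
      calc Real.log (sInf S) ≤ Real.log (Real.exp x) := Real.log_le_log hSpos h1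
      _ = x := Real.log_exp x
    · rw [Real.sInf_of_not_bddBelow hbd]
      have h0 : sInf S ≤ 0 := by
        by_contra h
        push_neg at h
        obtain ⟨x, hx, hxlt⟩ : ∃ x ∈ S', x < Real.log (sInf S) := by
          by_contra hc
          push_neg at hc
          exact hbd ⟨Real.log (sInf S), fun x hx => hc x hx⟩
        have h1 : sInf S ≤ Real.exp x := csInf_le hSbdd (hST x hx)
        have h2 : Real.exp x < sInf S := by
          calc Real.exp x < Real.exp (Real.log (sInf S)) := Real.exp_lt_exp.mpr hxlt
          _ = sInf S := Real.exp_log h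
        exact absurd (h1.trans_lt h2) (lt_irrefl _)
      rw [le_antisymm h0 hS0, Real.log_zero]
  · have hSempty : S = ∅ := by
      rw [Set.eq_empty_iff_forall_notMem]
      intro y hy
      exact hne ⟨Real.log y, hTS y hy⟩
    rw [hSempty, Real.sInf_empty, Real.log_zero,
      Set.not_nonempty_iff_eq_empty.mp hne, Real.sInf_empty]

theorem stmt5 {Ω : Type*} [MeasurableSpace Ω] (μ : Measure Ω) [IsProbabilityMeasure μ]
    {K : ℕ} (hK : 2 ≤ K)
    (Y : Ω → Fin K → ℝ) (hY : ∀ k, ∀ᵐ ω ∂μ, 0 < Y ω k) (i : Fin K)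
    (b : Fin K → ℝ) (hb : ∀ j, j ≠ i → 0 < b j)
    (p : ℝ) (hp : p ∈ Set.Ioo (0 : ℝ) 1)
    (R : Ω → ℝ)
    (hR : R = fun ω => (Y ω i) ^ ((K : ℝ) - 1) / ∏ j ∈ Finset.univ.erase i, (Y ω j) ^ (b j))
    (Z : Ω → EuclideanSpace ℝ (Fin K)) (hZ : ∀ ω k, Z ω k = Real.log (Y ω k)) :
    dqe μ Z p ⊆
      {z : EuclideanSpace ℝ (Fin K) |
        Real.log (quantileFn μ R p) ≤
          ((K : ℝ) - 1) * z i - ∑ j ∈ Finset.univ.erase i, b j * z j} := by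
  intro z hz
  have hK1 : (0:ℝ) < (K:ℝ) - 1 := by
    have : (2:ℝ) ≤ (K:ℝ) := by exact_mod_cast hK
    linarith
  set v : EuclideanSpace ℝ (Fin K) :=
    WithLp.toLp 2 (fun k => if k = i then (K:ℝ) - 1 else -(b k)) with hv
  have hvi : v i = (K:ℝ) - 1 := by simp [hv]
  have hvne : v ≠ 0 := by
    intro h
    have h0 : v i = 0 := by rw [h]; rfl
    rw [hvi] at h0; linarith
  have hc : 0 < ‖v‖ := norm_pos_iff.mpr hvne
  set c : ℝ := ‖v‖ with hcdef
  set d : EuclideanSpace ℝ (Fin K) := c⁻¹ • v with hd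
  have hdnorm : ‖d‖ = 1 := by
    rw [hd, norm_smul, norm_inv, Real.norm_eq_abs, abs_of_pos hc, ← hcdef,
      inv_mul_cancel₀ hc.ne']
  have hz' : quantileFn μ (fun ω => (inner ℝ d (Z ω) : ℝ)) p ≤ (inner ℝ d z : ℝ) :=
    Set.mem_iInter.mp (Set.mem_iInter.mp hz d) hdnorm
  have hinner : ∀ w : EuclideanSpace ℝ (Fin K),
      (inner ℝ v w : ℝ) = ((K:ℝ) - 1) * w i - ∑ j ∈ Finset.univ.erase i, b j * w j := by
    intro w
    have h1 : (inner ℝ v w : ℝ) = ∑ k, v k * w k := by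
      simp [PiLp.inner_apply, RCLike.inner_apply, mul_comm]
    rw [h1, ← Finset.add_sum_erase Finset.univ (fun k => v k * w k) (Finset.mem_univ i),
      hvi]
    have h2 : ∑ k ∈ Finset.univ.erase i, v k * w k
        = ∑ k ∈ Finset.univ.erase i, -(b k * w k) := by
      refine Finset.sum_congr rfl fun k hk => ?_
      have hki : k ≠ i := Finset.ne_of_mem_erase hk
      simp [hv, hki, neg_mul]
    rw [h2, Finset.sum_neg_distrib]
    ring
  have hae : ∀ᵐ ω ∂μ, ∀ k, 0 < Y ω k := ae_all_iff.mpr hY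
  have hRpos : ∀ᵐ ω ∂μ, 0 < R ω := by
    filter_upwards [hae] with ω hω
    rw [hR]
    exact div_pos (Real.rpow_pos_of_pos (hω i) _)
      (Finset.prod_pos fun j _ => Real.rpow_pos_of_pos (hω j) _)
  have hRlog : ∀ᵐ ω ∂μ, (inner ℝ v (Z ω) : ℝ) = Real.log (R ω) := by
    filter_upwards [hae] with ω hω
    rw [hinner, hR]
    simp only
    rw [Real.log_div (Real.rpow_pos_of_pos (hω i) _).ne'
      (Finset.prod_pos fun j _ => Real.rpow_pos_of_pos (hω j) (b j)).ne',
      Real.log_rpow (hω i),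
      Real.log_prod (fun j _ => (Real.rpow_pos_of_pos (hω j) (b j)).ne')]
    congr 1
    · simp only [hZ]
    · refine Finset.sum_congr rfl fun j _ => ?_
      rw [Real.log_rpow (hω j), hZ]
  set T : Set ℝ := {x : ℝ | ENNReal.ofReal p ≤ μ {ω | (inner ℝ d (Z ω) : ℝ) ≤ x}} with hT
  have hset : {x : ℝ | ENNReal.ofReal p ≤ μ {ω | Real.log (R ω) ≤ x}} = c • T := by
    ext x
    rw [Set.mem_smul_set_iff_inv_smul_mem₀ hc.ne', hT]
    simp only [Set.mem_setOf_eq, smul_eq_mul]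
    have hμeq : μ {ω | Real.log (R ω) ≤ x} = μ {ω | (inner ℝ d (Z ω) : ℝ) ≤ c⁻¹ * x} := by
      refine measure_congr ?_
      refine Filter.eventuallyEq_set.mpr ?_
      filter_upwards [hRlog] with ω hω
      have hdz : (inner ℝ d (Z ω) : ℝ) = c⁻¹ * Real.log (R ω) := by
        rw [hd, real_inner_smul_left, hω]
      simp only [Set.mem_setOf_eq, hdz]
      constructor
      · intro h
        exact mul_le_mul_of_nonneg_left h (inv_nonneg.mpr hc.le)
      · intro h
        have := mul_le_mul_of_nonneg_left h hc.le
        rwa [← mul_assoc, mul_inv_cancel₀ hc.ne', one_mul, ← mul_assoc,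
          mul_inv_cancel₀ hc.ne', one_mul] at this
    rw [hμeq]
  calc Real.log (quantileFn μ R p)
      ≤ sInf {x : ℝ | ENNReal.ofReal p ≤ μ {ω | Real.log (R ω) ≤ x}} :=
        log_sInf_le μ R hRpos hp.1
    _ = sInf (c • T) := by rw [hset]
    _ = c * sInf T := by rw [Real.sInf_smul_of_nonneg hc.le, smul_eq_mul]
    _ ≤ c * (inner ℝ d z : ℝ) := mul_le_mul_of_nonneg_left hz' hc.le
    _ = (inner ℝ v z : ℝ) := by
        rw [hd, real_inner_smul_left, ← mul_assoc, mul_inv_cancel₀ hc.ne', one_mul]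
    _ = ((K:ℝ) - 1) * z i - ∑ j ∈ Finset.univ.erase i, b j * z j := hinner z
end
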